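/- Let α > 1 and let h : (0,1] → ℝ be positive, monotone increasing, with h(x) ≤ x^α for all x ∈ (0,1]; set μ(x) := ∫_x^1 dt/h(t). Then for every s₀ < 0 there is a constant c > 0 (depending only on h, α and s₀) such that for all s ≤ s₀, all f ∈ L²(0,1), and all x ∈ (0,1): |∫_x^1 exp(s(μ(x) − μ(y))) f(y) dy| ≤ (c/√|s|) · x^{α/2} · ‖f‖_{L²(0,1)}. -/

import Mathlib

set_option maxHeartbeats 1000000
open MeasureTheory Set Real

section Aux
variable (h : ℝ → ℝ)
    (hpos : ∀ x ∈ Ioc (0:ℝ) 1, 0 < h x)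
    (hmono : ∀ x ∈ Ioc (0:ℝ) 1, ∀ y ∈ Ioc (0:ℝ) 1, x ≤ y → h x ≤ h y)

include hpos hmono in
lemma aux_int {a b : ℝ} (ha : 0 < a) (hab : a ≤ b) (hb : b ≤ 1) :
    IntervalIntegrable (fun t => 1 / h t) volume a b := by
  apply AntitoneOn.intervalIntegrable
  rw [uIcc_of_le hab]
  intro u hu v hv huv
  have hu' : u ∈ Ioc (0:ℝ) 1 := ⟨ha.trans_le hu.1, hu.2.trans hb⟩
  have hv' : v ∈ Ioc (0:ℝ) 1 := ⟨ha.trans_le hv.1, hv.2.trans hb⟩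
  exact one_div_le_one_div_of_le (hpos u hu') (hmono u hu' v hv' huv)

include hpos hmono in
lemma aux_diff (μ : ℝ → ℝ) (hμ : ∀ x, μ x = ∫ t in x..1, 1 / h t)
    {x y : ℝ} (hx : 0 < x) (hxy : x ≤ y) (hy : y ≤ 1) :
    μ x - μ y = ∫ t in x..y, 1 / h t := by
  rw [hμ, hμ]
  have h1 := aux_int h hpos hmono hx hxy hy
  have h2 := aux_int h hpos hmono (hx.trans_le hxy) hy le_rfl
  rw [← intervalIntegral.integral_add_adjacent_intervals h1 h2]
  ring

include hpos hmono in
lemma aux_lb (μ : ℝ → ℝ) (hμ : ∀ x, μ x = ∫ t in x..1, 1 / h t)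
    {x y c : ℝ} (hx : 0 < x) (hxy : x ≤ y) (hy : y ≤ 1)
    (hc : ∀ t ∈ Icc x y, c ≤ 1 / h t) :
    c * (y - x) ≤ μ x - μ y := by
  rw [aux_diff h hpos hmono μ hμ hx hxy hy]
  have hconst : ∫ _t in x..y, c = c * (y - x) := by
    simp [intervalIntegral.integral_const, smul_eq_mul, mul_comm]
  rw [← hconst]
  exact intervalIntegral.integral_mono_on hxy intervalIntegrable_const
    (aux_int h hpos hmono hx hxy hy) hc

include hpos hmono in
lemma aux_nonneg (μ : ℝ → ℝ) (hμ : ∀ x, μ x = ∫ t in x..1, 1 / h t)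
    {x y : ℝ} (hx : 0 < x) (hxy : x ≤ y) (hy : y ≤ 1) :
    0 ≤ μ x - μ y := by
  rw [aux_diff h hpos hmono μ hμ hx hxy hy]
  apply intervalIntegral.integral_nonneg hxy
  intro t ht
  have ht' : t ∈ Ioc (0:ℝ) 1 := ⟨hx.trans_le ht.1, ht.2.trans hy⟩
  have := hpos t ht'
  positivity

end Aux

lemma aux_exp {a x m : ℝ} (ha : a < 0) (hxm : x ≤ m) :
    ∫ y in Ioo x m, Real.exp (a * (y - x)) ≤ 1 / (-a) := by
  rw [← integral_Ioc_eq_integral_Ioo, ← intervalIntegral.integral_of_le hxm]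
  have key : ∫ y in x..m, Real.exp (a * (y - x))
      = Real.exp (a*(m-x))/a - Real.exp (a*(x-x))/a := by
    apply intervalIntegral.integral_eq_sub_of_hasDerivAt
      (f := fun y => Real.exp (a*(y-x))/a)
    · intro y _
      have h1 : HasDerivAt (fun y : ℝ => a * (y - x)) a y := by
        simpa using ((hasDerivAt_id y).sub_const x).const_mul a
      have h2 := (Real.hasDerivAt_exp (a*(y-x))).comp y h1
      have h3 := h2.div_const a
      simpa [mul_div_cancel_right₀ _ ha.ne] using h3
    · apply Continuous.intervalIntegrable
      continuity
  rw [key]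
  have h1 : 0 ≤ Real.exp (a*(m-x)) := (Real.exp_pos _).le
  have h2 : Real.exp (a*(x-x)) = 1 := by simp
  rw [h2]
  have hrw : Real.exp (a*(m-x))/a - 1/a = (1 - Real.exp (a*(m-x)))/(-a) := by
    ring
  rw [hrw]
  gcongr
  · linarith
  · linarith

lemma aux_decay {T : ℝ} (hT : 0 < T) {k : ℕ} (hk : 1 ≤ k) :
    Real.exp (-T) ≤ ((k:ℝ)/T)^k := by
  have hk0 : (0:ℝ) < k := by exact_mod_cast hk
  have h1 : (T/k)^k ≤ Real.exp T := by
    calc (T/k)^k ≤ (Real.exp (T/k))^k := by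
          apply pow_le_pow_left₀ (by positivity)
          have := Real.add_one_le_exp (T/k)
          linarith
      _ = Real.exp ((k:ℕ) * (T/k)) := by rw [Real.exp_nat_mul]
      _ = Real.exp T := by congr 1; field_simp
  have h2 : (0:ℝ) < (T/k)^k := by positivity
  rw [Real.exp_neg]
  calc (Real.exp T)⁻¹ ≤ ((T/k)^k)⁻¹ := by
        apply inv_anti₀ h2 h1
    _ = ((k:ℝ)/T)^k := by rw [← inv_pow, inv_div]

/-- The key estimate: `∫_{(x,1)} e^{2s(μ(x)-μ(y))} dy ≤ C x^α / (-s)`. -/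
lemma aux_G2 (α : ℝ) (hα : 1 < α) (h : ℝ → ℝ)
    (hpos : ∀ x ∈ Ioc (0:ℝ) 1, 0 < h x)
    (hmono : ∀ x ∈ Ioc (0:ℝ) 1, ∀ y ∈ Ioc (0:ℝ) 1, x ≤ y → h x ≤ h y)
    (hbound : ∀ x ∈ Ioc (0:ℝ) 1, h x ≤ x ^ α)
    (μ : ℝ → ℝ) (hμ : ∀ x, μ x = ∫ t in x..1, 1 / h t)
    (s₀ : ℝ) (hs₀ : s₀ < 0) (k : ℕ) (hk1 : 1 ≤ k) (hkα : α ≤ (α-1) * k)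
    (s : ℝ) (hs : s ≤ s₀) (x : ℝ) (hx0 : 0 < x) (hx1 : x < 1) :
    ∫ y in Ioo x 1, Real.exp (2*s*(μ x - μ y)) ≤
      ((2:ℝ)^(α-1) + (k:ℝ)^k * (2:ℝ)^((α-1)*(k:ℝ)) * ((-s₀)⁻¹)^(k-1)) * x^α * (-s)⁻¹ := by
  have hα1 : (0:ℝ) < α - 1 := by linarith
  have hs₀' : (0:ℝ) < -s₀ := by linarith
  have hsneg : s < 0 := lt_of_le_of_lt hs hs₀
  have hs' : (0:ℝ) < -s := by linarith
  have hss : -s₀ ≤ -s := by linarith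
  set K₂ : ℝ := (k:ℝ)^k * (2:ℝ)^((α-1)*(k:ℝ)) * ((-s₀)⁻¹)^(k-1) with hK₂def
  have hkpos : (0:ℝ) < k := by exact_mod_cast hk1
  have hK₂pos : 0 < K₂ := by positivity
  set G2 : ℝ → ℝ := fun y => Real.exp (2*s*(μ x - μ y)) with hG2def
  -- basic facts
  have h2xpos : (0:ℝ) < 2*x := by linarith
  have h2xα : (0:ℝ) < (2*x)^α := rpow_pos_of_pos h2xpos α
  -- the inverse-h lower bound on [x, y] for y ≤ 2x
  have hc_lb : ∀ y, x ≤ y → y ≤ 2*x → y ≤ 1 → ∀ t ∈ Icc x y, ((2*x)^α)⁻¹ ≤ 1 / h t := by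
    intro y hxy hy2x hy1 t ht
    have ht' : t ∈ Ioc (0:ℝ) 1 := ⟨hx0.trans_le ht.1, ht.2.trans hy1⟩
    have hy' : y ∈ Ioc (0:ℝ) 1 := ⟨hx0.trans_le hxy, hy1⟩
    have h1 : h t ≤ (2*x)^α := by
      calc h t ≤ h y := hmono t ht' y hy' ht.2
        _ ≤ y^α := hbound y hy'
        _ ≤ (2*x)^α := by
            apply Real.rpow_le_rpow (le_of_lt hy'.1) hy2x (by linarith)
    rw [one_div]
    exact inv_anti₀ (hpos t ht') h1
  -- μ is antitone on Ioo x 1, hence measurable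
  have hμanti : AntitoneOn μ (Ioo x 1) := by
    intro u hu v hv huv
    have := aux_nonneg h hpos hmono μ hμ (hx0.trans hu.1) huv hv.2.le
    linarith
  have hμae : AEMeasurable μ (volume.restrict (Ioo x 1)) :=
    aemeasurable_restrict_of_antitoneOn measurableSet_Ioo hμanti
  have hG2ae : AEStronglyMeasurable G2 (volume.restrict (Ioo x 1)) := by
    exact (Real.measurable_exp.comp_aemeasurable
      ((aemeasurable_const.sub hμae).const_mul (2*s))).aestronglyMeasurable
  have hG2le1 : ∀ y ∈ Ioo x 1, G2 y ≤ 1 := by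
    intro y hy
    rw [hG2def]
    simp only
    rw [Real.exp_le_one_iff]
    have h1 := aux_nonneg h hpos hmono μ hμ hx0 hy.1.le hy.2.le
    nlinarith
  haveI : IsFiniteMeasure (volume.restrict (Ioo x 1)) := by
    constructor
    rw [Measure.restrict_apply_univ]
    simp [Real.volume_Ioo]
  have hG2int : IntegrableOn G2 (Ioo x 1) volume := by
    rw [IntegrableOn, ← memLp_one_iff_integrable]
    apply MemLp.of_bound hG2ae 1
    filter_upwards [ae_restrict_mem measurableSet_Ioo] with y hy
    rw [Real.norm_eq_abs, abs_of_pos (Real.exp_pos _)]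
    exact hG2le1 y hy
  -- split at m
  set m : ℝ := min (2*x) 1 with hmdef
  have hxm : x < m := lt_min (by linarith) hx1
  have hm1 : m ≤ 1 := min_le_right _ _
  have hm2x : m ≤ 2*x := min_le_left _ _
  have hsplit : Ioo x 1 = Ioo x m ∪ Ico m 1 := (Ioo_union_Ico_eq_Ioo hxm hm1).symm
  have hint1 : IntegrableOn G2 (Ioo x m) volume := hG2int.mono_set (by rw [hsplit]; exact subset_union_left)
  have hint2 : IntegrableOn G2 (Ico m 1) volume := hG2int.mono_set (by rw [hsplit]; exact subset_union_right)
  have hdisj : Disjoint (Ioo x m) (Ico m 1) := by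
    apply Set.disjoint_left.mpr
    intro y hy1 hy2
    exact absurd hy2.1 (not_le.mpr hy1.2)
  have hsum : ∫ y in Ioo x 1, G2 y = (∫ y in Ioo x m, G2 y) + ∫ y in Ico m 1, G2 y := by
    rw [hsplit]
    exact setIntegral_union hdisj measurableSet_Ico hint1 hint2
  -- Part 1
  set a : ℝ := 2*s*((2*x)^α)⁻¹ with hadef
  have ha : a < 0 := by
    apply mul_neg_of_neg_of_pos (by linarith) (by positivity)
  have hpart1 : ∫ y in Ioo x m, G2 y ≤ (2:ℝ)^(α-1) * x^α * (-s)⁻¹ := by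
    have hptwise : ∀ y ∈ Ioo x m, G2 y ≤ Real.exp (a * (y - x)) := by
      intro y hy
      have hxy : x ≤ y := hy.1.le
      have hy2x : y ≤ 2*x := hy.2.le.trans hm2x
      have hy1 : y ≤ 1 := hy.2.le.trans hm1
      have hlb := aux_lb h hpos hmono μ hμ (c := ((2*x)^α)⁻¹) hx0 hxy hy1
        (hc_lb y hxy hy2x hy1)
      rw [hG2def]
      simp only
      apply Real.exp_le_exp.mpr
      rw [hadef]
      nlinarith
    have hexpint : IntegrableOn (fun y => Real.exp (a * (y - x))) (Ioo x m) volume := by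
      have hcont : Continuous (fun y : ℝ => Real.exp (a * (y - x))) :=
        Real.continuous_exp.comp (continuous_const.mul (continuous_id.sub continuous_const))
      exact (hcont.integrableOn_Icc.mono_set Ioo_subset_Icc_self)
    calc ∫ y in Ioo x m, G2 y ≤ ∫ y in Ioo x m, Real.exp (a * (y - x)) :=
          setIntegral_mono_on hint1 hexpint measurableSet_Ioo hptwise
      _ ≤ 1 / (-a) := aux_exp ha hxm.le
      _ = (2:ℝ)^(α-1) * x^α * (-s)⁻¹ := by
          rw [hadef, Real.mul_rpow (by norm_num) hx0.le,
            Real.rpow_sub two_pos, Real.rpow_one]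
          have hx_ne : x^α ≠ 0 := ne_of_gt (rpow_pos_of_pos hx0 α)
          have h2_ne : (2:ℝ)^α ≠ 0 := ne_of_gt (rpow_pos_of_pos two_pos α)
          field_simp
  -- Part 2
  have hpart2 : ∫ y in Ico m 1, G2 y ≤ K₂ * x^α * (-s)⁻¹ := by
    rcases le_or_gt 1 (2*x) with h2x | h2x
    · have hm : m = 1 := min_eq_right h2x
      rw [hm, Ico_self, Measure.restrict_empty, integral_zero_measure]
      positivity
    · have hm : m = 2*x := min_eq_left h2x.le
      set T : ℝ := 2*(-s)*x*((2*x)^α)⁻¹ with hTdef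
      have hT : 0 < T := by positivity
      have hptwise : ∀ y ∈ Ico m 1, G2 y ≤ Real.exp (-T) := by
        intro y hy
        have h2xy : 2*x ≤ y := hm ▸ hy.1
        have hy1 : y ≤ 1 := hy.2.le
        have hlb1 := aux_lb h hpos hmono μ hμ (c := ((2*x)^α)⁻¹) hx0 (by linarith : x ≤ 2*x)
          (by linarith : 2*x ≤ 1) (hc_lb (2*x) (by linarith) le_rfl (by linarith))
        have hlb2 := aux_nonneg h hpos hmono μ hμ h2xpos h2xy hy1
        rw [hG2def]
        simp only
        apply Real.exp_le_exp.mpr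
        have hμxy : x * ((2*x)^α)⁻¹ ≤ μ x - μ y := by nlinarith
        rw [hTdef]
        nlinarith
      calc ∫ y in Ico m 1, G2 y ≤ ∫ _y in Ico m 1, Real.exp (-T) :=
            setIntegral_mono_on hint2 ((integrableOn_const_iff).mpr (Or.inr (by
              rw [Real.volume_Ico]; exact ENNReal.ofReal_lt_top))) measurableSet_Ico hptwise
        _ = (volume (Ico m 1)).toReal * Real.exp (-T) := by
              rw [setIntegral_const, smul_eq_mul, measureReal_def]
        _ ≤ 1 * Real.exp (-T) := by
              apply mul_le_mul_of_nonneg_right _ (Real.exp_pos _).le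
              rw [Real.volume_Ico, ENNReal.toReal_ofReal (by linarith)]
              linarith
        _ = Real.exp (-T) := one_mul _
        _ ≤ ((k:ℝ)/T)^k := aux_decay hT hk1
        _ ≤ K₂ * x^α * (-s)⁻¹ := by
            -- compute (k/T)^k
            have hTinv : T⁻¹ = (2:ℝ)^(α-1) * x^(α-1) * (-s)⁻¹ := by
              rw [hTdef, Real.mul_rpow (by norm_num) hx0.le,
                Real.rpow_sub two_pos, Real.rpow_sub hx0, Real.rpow_one, Real.rpow_one]
              have hx_ne : x^α ≠ 0 := ne_of_gt (rpow_pos_of_pos hx0 α)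
              have h2_ne : (2:ℝ)^α ≠ 0 := ne_of_gt (rpow_pos_of_pos two_pos α)
              field_simp
            have hsplitpow : ((k:ℝ)/T)^k
                = (k:ℝ)^k * ((2:ℝ)^(α-1))^k * ((x^(α-1))^k * (((-s)⁻¹)^k)) := by
              rw [div_eq_mul_inv, hTinv]
              ring
            rw [hsplitpow]
            have h2k : ((2:ℝ)^(α-1))^k = (2:ℝ)^((α-1)*(k:ℝ)) := by
              rw [← Real.rpow_natCast ((2:ℝ)^(α-1)) k, ← Real.rpow_mul (by norm_num)]
            have hxk : (x^(α-1))^k ≤ x^α := by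
              rw [← Real.rpow_natCast (x^(α-1)) k, ← Real.rpow_mul hx0.le]
              exact Real.rpow_le_rpow_of_exponent_ge hx0 hx1.le hkα
            have hsk : ((-s)⁻¹)^k ≤ ((-s₀)⁻¹)^(k-1) * (-s)⁻¹ := by
              have hkk : k = (k-1) + 1 := (Nat.succ_pred_eq_of_pos hk1).symm
              rw [hkk, pow_succ]
              apply mul_le_mul_of_nonneg_right _ (by positivity)
              apply pow_le_pow_left₀ (by positivity)
              exact inv_anti₀ hs₀' hss
            rw [h2k, hK₂def]
            have hxα : (0:ℝ) ≤ x^α := (rpow_pos_of_pos hx0 α).le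
            calc (k:ℝ)^k * (2:ℝ)^((α-1)*(k:ℝ)) * ((x^(α-1))^k * (((-s)⁻¹)^k))
                ≤ (k:ℝ)^k * (2:ℝ)^((α-1)*(k:ℝ)) * (x^α * (((-s₀)⁻¹)^(k-1) * (-s)⁻¹)) := by
                  apply mul_le_mul_of_nonneg_left _ (by positivity)
                  apply mul_le_mul hxk hsk (by positivity) hxα
              _ = (k:ℝ)^k * (2:ℝ)^((α-1)*(k:ℝ)) * ((-s₀)⁻¹)^(k-1) * x^α * (-s)⁻¹ := by ring
  rw [hsum]
  have : ((2:ℝ)^(α-1) + K₂) * x^α * (-s)⁻¹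
      = (2:ℝ)^(α-1) * x^α * (-s)⁻¹ + K₂ * x^α * (-s)⁻¹ := by ring
  rw [this]
  exact add_le_add hpart1 hpart2

theorem stmt_1 (α : ℝ) (hα : 1 < α) (h : ℝ → ℝ)
    (hpos : ∀ x ∈ Ioc (0:ℝ) 1, 0 < h x)
    (hmono : ∀ x ∈ Ioc (0:ℝ) 1, ∀ y ∈ Ioc (0:ℝ) 1, x ≤ y → h x ≤ h y)
    (hbound : ∀ x ∈ Ioc (0:ℝ) 1, h x ≤ x ^ α)
    (μ : ℝ → ℝ) (hμ : ∀ x, μ x = ∫ t in x..1, 1 / h t)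
    (s₀ : ℝ) (hs₀ : s₀ < 0) :
    ∃ c > (0:ℝ), ∀ s ≤ s₀, ∀ f : ℝ → ℝ,
      MemLp f 2 (volume.restrict (Ioo (0:ℝ) 1)) →
      ∀ x ∈ Ioo (0:ℝ) 1,
        |∫ y in Ioo x 1, Real.exp (s * (μ x - μ y)) * f y| ≤
          (c / Real.sqrt |s|) * x ^ (α / 2) *
            (eLpNorm f 2 (volume.restrict (Ioo (0:ℝ) 1))).toReal := by
  have hα1 : (0:ℝ) < α - 1 := by linarith
  have hs₀' : (0:ℝ) < -s₀ := by linarith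
  -- choice of k
  set k : ℕ := ⌈α/(α-1)⌉₊ + 1 with hkdef
  have hk1 : 1 ≤ k := Nat.le_add_left 1 _
  have hkα : α ≤ (α-1) * k := by
    have h1 : α/(α-1) ≤ (k:ℝ) := by
      have h2 := Nat.le_ceil (α/(α-1))
      have h3 : (⌈α/(α-1)⌉₊ : ℝ) ≤ (k:ℝ) := by
        rw [hkdef]; push_cast; linarith
      linarith
    calc α = (α-1) * (α/(α-1)) := by field_simp
      _ ≤ (α-1)*k := by nlinarith
  set C : ℝ := (2:ℝ)^(α-1) + (k:ℝ)^k * (2:ℝ)^((α-1)*(k:ℝ)) * ((-s₀)⁻¹)^(k-1) with hCdef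
  have hkpos : (0:ℝ) < k := by positivity
  have hCpos : 0 < C := by positivity
  refine ⟨Real.sqrt C, Real.sqrt_pos.mpr hCpos, ?_⟩
  intro s hs f hf x hx
  obtain ⟨hx0, hx1⟩ := hx
  have hsneg : s < 0 := lt_of_le_of_lt hs hs₀
  have hs' : (0:ℝ) < -s := by linarith
  have habs : |s| = -s := abs_of_neg hsneg
  set ν₀ := volume.restrict (Ioo (0:ℝ) 1) with hν₀def
  set ν := volume.restrict (Ioo x 1) with hνdef
  haveI hfin : IsFiniteMeasure ν := by
    constructor
    rw [hνdef, Measure.restrict_apply_univ]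
    simp [Real.volume_Ioo]
  set g : ℝ → ℝ := fun y => Real.exp (s * (μ x - μ y)) with hgdef
  -- measurability of g
  have hμanti : AntitoneOn μ (Ioo x 1) := by
    intro u hu v hv huv
    have := aux_nonneg h hpos hmono μ hμ (hx0.trans hu.1) huv hv.2.le
    linarith
  have hμae : AEMeasurable μ ν :=
    aemeasurable_restrict_of_antitoneOn measurableSet_Ioo hμanti
  have hgae : AEStronglyMeasurable g ν :=
    (Real.measurable_exp.comp_aemeasurable
      ((aemeasurable_const.sub hμae).const_mul s)).aestronglyMeasurable
  have hgle1 : ∀ y ∈ Ioo x 1, g y ≤ 1 := by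
    intro y hy
    rw [hgdef]
    simp only
    rw [Real.exp_le_one_iff]
    have h1 := aux_nonneg h hpos hmono μ hμ hx0 hy.1.le hy.2.le
    nlinarith
  have hgmem : MemLp g 2 ν := by
    apply MemLp.of_bound hgae 1
    filter_upwards [ae_restrict_mem measurableSet_Ioo] with y hy
    rw [Real.norm_eq_abs, abs_of_pos (Real.exp_pos _)]
    exact hgle1 y hy
  -- f restricted
  have hsub : Ioo x 1 ⊆ Ioo (0:ℝ) 1 := Ioo_subset_Ioo hx0.le le_rfl
  have hνrestrict : ν = ν₀.restrict (Ioo x 1) := by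
    rw [hν₀def, hνdef, Measure.restrict_restrict measurableSet_Ioo,
      inter_eq_self_of_subset_left hsub]
  have hfmem : MemLp f 2 ν := by
    rw [hνrestrict]; exact hf.restrict _
  -- Cauchy-Schwarz
  have hconj : Real.HolderConjugate 2 2 := Real.holderConjugate_iff.mpr ⟨one_lt_two, by norm_num⟩
  have hCS := integral_mul_norm_le_Lp_mul_Lq (μ := ν) hconj
    (by rw [ENNReal.ofReal_ofNat]; exact hgmem) (by rw [ENNReal.ofReal_ofNat]; exact hfmem)
  -- identify ∫ ‖g‖^2 with the exponential integral
  have hg2eq : ∫ y, ‖g y‖ ^ (2:ℝ) ∂ν = ∫ y in Ioo x 1, Real.exp (2*s*(μ x - μ y)) := by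
    rw [hνdef]
    apply integral_congr_ae
    apply Filter.Eventually.of_forall
    intro y
    rw [hgdef]
    simp only
    rw [Real.norm_eq_abs, abs_of_pos (Real.exp_pos _), ← Real.exp_mul]
    ring_nf
  have hG2bound := aux_G2 α hα h hpos hmono hbound μ hμ s₀ hs₀ k hk1 hkα s hs x hx0 hx1
  have hg2le : ∫ y, ‖g y‖ ^ (2:ℝ) ∂ν ≤ C * x^α * (-s)⁻¹ := by
    rw [hg2eq, hCdef]; exact hG2bound
  -- bound on ∫ ‖f‖^2 over ν by over ν₀
  have hf2int : Integrable (fun y => ‖f y‖ ^ (2:ℝ)) ν₀ := by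
    have := hf.integrable_norm_rpow (by norm_num) (by norm_num)
    simpa using this
  have hf2le : ∫ y, ‖f y‖ ^ (2:ℝ) ∂ν ≤ ∫ y, ‖f y‖ ^ (2:ℝ) ∂ν₀ := by
    rw [hνdef, hν₀def]
    apply setIntegral_mono_set hf2int
    · apply Filter.Eventually.of_forall
      intro y
      positivity
    · exact HasSubset.Subset.eventuallyLE hsub
  -- eLpNorm identification
  have hf2nonneg : 0 ≤ ∫ y, ‖f y‖ ^ (2:ℝ) ∂ν₀ :=
    integral_nonneg fun y => by positivity
  have heLp : (eLpNorm f 2 ν₀).toReal = (∫ y, ‖f y‖ ^ (2:ℝ) ∂ν₀) ^ ((1:ℝ)/2) := by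
    rw [hf.eLpNorm_eq_integral_rpow_norm (by norm_num) (by norm_num)]
    rw [ENNReal.toReal_ofReal (by positivity)]
    norm_num
  -- assemble
  have hg2nonneg : 0 ≤ ∫ y, ‖g y‖ ^ (2:ℝ) ∂ν :=
    integral_nonneg fun y => by positivity
  have hf2nonneg' : 0 ≤ ∫ y, ‖f y‖ ^ (2:ℝ) ∂ν :=
    integral_nonneg fun y => by positivity
  have hA : (∫ y, ‖g y‖ ^ (2:ℝ) ∂ν) ^ ((1:ℝ)/2)
      ≤ Real.sqrt C * x ^ (α/2) * (Real.sqrt (-s))⁻¹ := by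
    have h1 : (∫ y, ‖g y‖ ^ (2:ℝ) ∂ν) ^ ((1:ℝ)/2) ≤ (C * x^α * (-s)⁻¹) ^ ((1:ℝ)/2) :=
      Real.rpow_le_rpow hg2nonneg hg2le (by norm_num)
    have h2 : (C * x^α * (-s)⁻¹) ^ ((1:ℝ)/2) = Real.sqrt C * x ^ (α/2) * (Real.sqrt (-s))⁻¹ := by
      rw [← Real.sqrt_eq_rpow]
      rw [show C * x^α * (-s)⁻¹ = C * (x^α * (-s)⁻¹) by ring]
      rw [Real.sqrt_mul hCpos.le, Real.sqrt_mul (by positivity), Real.sqrt_inv]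
      rw [show Real.sqrt (x^α) = x^(α/2) by
        rw [Real.sqrt_eq_rpow, ← Real.rpow_mul hx0.le]; congr 1; ring]
      ring
    linarith
  have hB : (∫ y, ‖f y‖ ^ (2:ℝ) ∂ν) ^ ((1:ℝ)/2) ≤ (eLpNorm f 2 ν₀).toReal := by
    rw [heLp]
    exact Real.rpow_le_rpow hf2nonneg' hf2le (by norm_num)
  -- final chain
  have hLHS : |∫ y in Ioo x 1, Real.exp (s * (μ x - μ y)) * f y|
      ≤ ∫ y, ‖g y‖ * ‖f y‖ ∂ν := by
    rw [← Real.norm_eq_abs]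
    calc ‖∫ y in Ioo x 1, Real.exp (s * (μ x - μ y)) * f y‖
        ≤ ∫ y in Ioo x 1, ‖Real.exp (s * (μ x - μ y)) * f y‖ :=
          norm_integral_le_integral_norm _
      _ = ∫ y, ‖g y‖ * ‖f y‖ ∂ν := by
          rw [hνdef]
          apply integral_congr_ae
          apply Filter.Eventually.of_forall
          intro y
          simp only [hgdef]
          rw [norm_mul]
  calc |∫ y in Ioo x 1, Real.exp (s * (μ x - μ y)) * f y|
      ≤ ∫ y, ‖g y‖ * ‖f y‖ ∂ν := hLHS
    _ ≤ (∫ y, ‖g y‖ ^ (2:ℝ) ∂ν) ^ ((1:ℝ)/2) * (∫ y, ‖f y‖ ^ (2:ℝ) ∂ν) ^ ((1:ℝ)/2) := hCS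
    _ ≤ (Real.sqrt C * x ^ (α/2) * (Real.sqrt (-s))⁻¹) * (eLpNorm f 2 ν₀).toReal := by
        apply mul_le_mul hA hB (by positivity) (by positivity)
    _ = (Real.sqrt C / Real.sqrt |s|) * x ^ (α/2) * (eLpNorm f 2 ν₀).toReal := by
        rw [habs]
        ring
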